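/- Let K be a field of characteristic 2 and let β, γ, c ∈ K. If there exists a rational function f in the rational function field K(x) such that f² + f = β·x⁻¹ + γ·x + c, then β = 0, γ = 0, and there exists a ∈ K with c = a² + a. -/

import Mathlib

/-- Let `K` be a field of characteristic 2 and `β, γ, c ∈ K`. If there exists a rational
function `f ∈ K(x)` with `f² + f = β·x⁻¹ + γ·x + c`, then `β = 0`, `γ = 0` and
`c = a² + a` for some `a ∈ K`. -/
theorem stmt0 (K : Type*) [Field K] [CharP K 2] (β γ c : K)
    (h : ∃ f : RatFunc K,
      f ^ 2 + f = RatFunc.C β * (RatFunc.X)⁻¹ + RatFunc.C γ * RatFunc.X + RatFunc.C c) :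
    β = 0 ∧ γ = 0 ∧ ∃ a : K, c = a ^ 2 + a := by
  obtain ⟨f, hf⟩ := h
  set p := f.num with hp
  set q := f.denom with hq
  have hcop : IsCoprime p q := RatFunc.isCoprime_num_denom f
  have hmon : q.Monic := RatFunc.monic_denom f
  have hq0 : (algebraMap (Polynomial K) (RatFunc K)) q ≠ 0 :=
    RatFunc.algebraMap_ne_zero (RatFunc.denom_ne_zero f)
  have hX0 : (RatFunc.X : RatFunc K) ≠ 0 := RatFunc.X_ne_zero
  have hfeq : f = algebraMap _ _ p / algebraMap _ _ q := (RatFunc.num_div_denom f).symm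
  rw [hfeq] at hf
  field_simp at hf
  have key : p ^ 2 * Polynomial.X + p * q * Polynomial.X
      = (Polynomial.C β + Polynomial.C γ * Polynomial.X ^ 2 + Polynomial.C c * Polynomial.X)
        * q ^ 2 := by
    apply RatFunc.algebraMap_injective K
    push_cast [map_add, map_mul, map_pow, RatFunc.algebraMap_C, RatFunc.algebraMap_X]
    apply mul_right_cancel₀ hq0
    linear_combination (algebraMap (Polynomial K) (RatFunc K) q) * hf
  clear hf hfeq hq0 hX0
  -- q^2 divides X, hence q = 1
  have hcq : IsCoprime q (p * (p + q)) := by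
    refine (hcop.symm).mul_right ?_
    simpa using (hcop.symm).add_mul_left_right 1
  have hdvd : q ^ 2 ∣ Polynomial.X := by
    have h1 : q ^ 2 ∣ p * (p + q) * Polynomial.X :=
      ⟨Polynomial.C β + Polynomial.C γ * Polynomial.X ^ 2 + Polynomial.C c * Polynomial.X,
        by linear_combination key⟩
    exact (show IsCoprime (q ^ 2) (p * (p + q)) from hcq.pow_left).dvd_of_dvd_mul_left h1
  have hq1 : q = 1 := by
    have hd := Polynomial.natDegree_le_of_dvd hdvd Polynomial.X_ne_zero
    rw [Polynomial.natDegree_pow, Polynomial.natDegree_X] at hd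
    exact hmon.natDegree_eq_zero.mp (by omega)
  rw [hq1] at key
  simp only [mul_one, one_pow] at key
  -- β = 0
  have hβ : β = 0 := by
    have := congrArg (Polynomial.eval 0) key
    simpa using this.symm
  subst hβ
  simp only [map_zero, zero_add] at key
  -- cancel X
  have key2 : p ^ 2 + p = Polynomial.C γ * Polynomial.X + Polynomial.C c := by
    apply mul_right_cancel₀ (Polynomial.X_ne_zero (R := K))
    linear_combination key
  -- p is constant
  have hdp : p.natDegree = 0 := by
    by_contra hn
    have h1 : (Polynomial.C γ * Polynomial.X + Polynomial.C c).natDegree ≤ 1 := by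
      compute_degree
    have h2 : (p ^ 2 + p).natDegree = 2 * p.natDegree := by
      rw [Polynomial.natDegree_add_eq_left_of_natDegree_lt, Polynomial.natDegree_pow]
      rw [Polynomial.natDegree_pow]
      omega
    rw [key2] at h2
    omega
  obtain ⟨a, ha⟩ := Polynomial.natDegree_eq_zero.mp hdp
  have key3 : Polynomial.C a ^ 2 + Polynomial.C a
      = Polynomial.C γ * Polynomial.X + Polynomial.C c := by rw [ha]; exact key2
  have hγ : γ = 0 := by
    have := congrArg (fun r => Polynomial.coeff r 1) key3
    simpa [← map_pow] using this.symm
  have hc : c = a ^ 2 + a := by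
    have := congrArg (fun r => Polynomial.coeff r 0) key3
    simpa [hγ, ← map_pow] using this.symm
  exact ⟨rfl, hγ, a, hc⟩
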